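/- arXiv:1312.1205 — 2 statements merged into one kernel-verified Lean document; each statement's English description precedes it below -/
import Mathlib

section
/- For every finite simple graph H on t ≥ 1 vertices and every finite nonempty simple graph G, one has i(H) ≤ R(H,G) ≤ I(H). -/
open Filter Topology SimpleGraph

namespace IndPaper

/-- The pullback of `G : SimpleGraph V` along a map `f : Fin t → V`:
distinct `i, j` are adjacent iff `f i` and `f j` are adjacent in `G`. -/
def pull {V : Type*} {t : ℕ} (G : SimpleGraph V) (f : Fin t → V) : SimpleGraph (Fin t) where
  Adj i j := G.Adj (f i) (f j)
  symm := ⟨fun i j h => G.symm.symm _ _ h⟩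
  loopless := ⟨fun i h => G.loopless.irrefl _ h⟩

/-- `r(H,G)`: the labeled density with repetitions of the labeled graph `H` in `G`. -/
noncomputable def labDensity {V : Type*} [Fintype V] {t : ℕ}
    (H : SimpleGraph (Fin t)) (G : SimpleGraph V) : ℝ :=
  (Nat.card {f : Fin t → V // pull G f = H} : ℝ) / (Fintype.card V : ℝ) ^ t

/-- `R(H,G)`: the density with repetitions of the isomorphism type of `H` in `G`. -/
noncomputable def repDensity {V : Type*} [Fintype V] {t : ℕ}
    (H : SimpleGraph (Fin t)) (G : SimpleGraph V) : ℝ :=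
  (Nat.card {f : Fin t → V // Nonempty (pull G f ≃g H)} : ℝ) / (Fintype.card V : ℝ) ^ t

/-- `p(H,G)`: the labeled density without repetitions (injective samples). -/
noncomputable def injDensity {V : Type*} [Fintype V] {t : ℕ}
    (H : SimpleGraph (Fin t)) (G : SimpleGraph V) : ℝ :=
  (Nat.card {f : Fin t → V // Function.Injective f ∧ pull G f = H} : ℝ) /
    ((Fintype.card V).descFactorial t : ℝ)

/-- `P(H,G)`: the number of `t`-subsets of `V(G)` inducing a copy of `H`, over `C(n,t)`. -/
noncomputable def subsetDensity {V : Type*} [Fintype V] {t : ℕ}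
    (H : SimpleGraph (Fin t)) (G : SimpleGraph V) : ℝ :=
  (Nat.card {s : Finset V // s.card = t ∧ Nonempty (G.induce (↑s : Set V) ≃g H)} : ℝ) /
    ((Fintype.card V).choose t : ℝ)

/-- `max_{|G|=n} P(H,G)`. -/
noncomputable def maxDensity {t : ℕ} (H : SimpleGraph (Fin t)) (n : ℕ) : ℝ :=
  sSup {x : ℝ | ∃ G : SimpleGraph (Fin n), x = subsetDensity H G}

/-- `min_{|G|=n} P(H,G)`. -/
noncomputable def minDensity {t : ℕ} (H : SimpleGraph (Fin t)) (n : ℕ) : ℝ :=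
  sInf {x : ℝ | ∃ G : SimpleGraph (Fin n), x = subsetDensity H G}

/-- The inducibility `I(H) = lim_n max_{|G|=n} P(H,G)` (the sequence of maxima is
eventually non-increasing, hence the limit exists and equals the `limsup`). -/
noncomputable def inducibility {t : ℕ} (H : SimpleGraph (Fin t)) : ℝ :=
  Filter.limsup (fun n => maxDensity H n) Filter.atTop

/-- The minimal inducibility `i(H) = lim_n min_{|G|=n} P(H,G)` (the sequence of minima is
eventually non-decreasing, hence the limit exists and equals the `liminf`). -/
noncomputable def minInducibility {t : ℕ} (H : SimpleGraph (Fin t)) : ℝ :=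
  Filter.liminf (fun n => minDensity H n) Filter.atTop

/-- The spectral profile: discrete Fourier transform of the labeled profile over the group
of labeled `t`-vertex graphs under symmetric difference of edge sets. -/
noncomputable def spectral {V : Type*} [Fintype V] {t : ℕ}
    (H : SimpleGraph (Fin t)) (G : SimpleGraph V) : ℝ :=
  ∑ H' : SimpleGraph (Fin t),
    (-1 : ℝ) ^ (Nat.card (H ⊓ H').edgeSet) * labDensity H' G

/-- The tensor product `G ⊗ G'`. -/
def tensor {V W : Type*} (G : SimpleGraph V) (G' : SimpleGraph W) : SimpleGraph (V × W) where
  Adj x y := Xor' (G.Adj x.1 y.1) (G'.Adj x.2 y.2)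
  symm := ⟨fun x y h => by
    rcases h with ⟨h1, h2⟩ | ⟨h1, h2⟩
    · exact Or.inl ⟨h1.symm, fun hc => h2 hc.symm⟩
    · exact Or.inr ⟨h1.symm, fun hc => h2 hc.symm⟩⟩
  loopless := ⟨fun x h => by
    rcases h with ⟨h1, _⟩ | ⟨h1, _⟩
    · exact G.loopless.irrefl _ h1
    · exact G'.loopless.irrefl _ h1⟩

/-- The composition (lexicographic product) `G ⊙ G'`. -/
def comp {V W : Type*} (G : SimpleGraph V) (G' : SimpleGraph W) : SimpleGraph (V × W) where
  Adj x y := G.Adj x.1 y.1 ∨ (x.1 = y.1 ∧ G'.Adj x.2 y.2)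
  symm := ⟨fun x y h => by
    rcases h with h | ⟨h1, h2⟩
    · exact Or.inl h.symm
    · exact Or.inr ⟨h1.symm, h2.symm⟩⟩
  loopless := ⟨fun x h => by
    rcases h with h | ⟨_, h2⟩
    · exact G.loopless.irrefl _ h
    · exact G'.loopless.irrefl _ h2⟩

/-- The blow-up of `G` of order `m`. -/
def blowUp {V : Type*} (G : SimpleGraph V) (m : ℕ) : SimpleGraph (V × Fin m) where
  Adj x y := G.Adj x.1 y.1
  symm := ⟨fun _ _ h => G.symm.symm _ _ h⟩
  loopless := ⟨fun _ h => G.loopless.irrefl _ h⟩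

/-- Vertex type of the `n`-fold iterated composition. -/
def iterVert (V : Type) : ℕ → Type
  | 0 => PUnit
  | n + 1 => V × iterVert V n

instance iterVertFintype (V : Type) [Fintype V] : (n : ℕ) → Fintype (iterVert V n)
  | 0 => inferInstanceAs (Fintype PUnit)
  | n + 1 => letI := iterVertFintype V n; inferInstanceAs (Fintype (V × iterVert V n))

/-- The `n`-fold iterated composition `G^{⊙n}` (`n = 0` gives a single vertex). -/
def nestedPow {V : Type} (G : SimpleGraph V) : (n : ℕ) → SimpleGraph (iterVert V n)
  | 0 => (⊥ : SimpleGraph PUnit)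
  | n + 1 => comp G (nestedPow G n)

/- Fixed labeled representatives of the 4-vertex isomorphism types. -/
def K3 : SimpleGraph (Fin 3) := ⊤
def K4 : SimpleGraph (Fin 4) := ⊤
def A4 : SimpleGraph (Fin 4) := ⊥
def P4 : SimpleGraph (Fin 4) := SimpleGraph.pathGraph 4
def C4 : SimpleGraph (Fin 4) := SimpleGraph.cycleGraph 4
def M4 : SimpleGraph (Fin 4) :=
  SimpleGraph.fromRel (fun i j => (i = 0 ∧ j = 1) ∨ (i = 2 ∧ j = 3))
def V4 : SimpleGraph (Fin 4) :=
  SimpleGraph.fromRel (fun i j => (i = 0 ∧ j = 1) ∨ (i = 0 ∧ j = 2))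
def Q4 : SimpleGraph (Fin 4) :=
  SimpleGraph.fromRel (fun i j =>
    (i = 0 ∧ j = 1) ∨ (i = 0 ∧ j = 2) ∨ (i = 1 ∧ j = 2) ∨ (i = 0 ∧ j = 3))
def T4 : SimpleGraph (Fin 4) :=
  SimpleGraph.fromRel (fun i j => (i = 0 ∧ j = 1) ∨ (i = 0 ∧ j = 2) ∨ (i = 1 ∧ j = 2))
def S4 : SimpleGraph (Fin 4) :=
  SimpleGraph.fromRel (fun i j => i = 0 ∧ (j = 1 ∨ j = 2 ∨ j = 3))
def D4 : SimpleGraph (Fin 4) :=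
  SimpleGraph.fromRel (fun i j =>
    (i = 0 ∧ j = 1) ∨ (i = 0 ∧ j = 2) ∨ (i = 0 ∧ j = 3) ∨ (i = 1 ∧ j = 2) ∨ (i = 1 ∧ j = 3))
def E4 : SimpleGraph (Fin 4) :=
  SimpleGraph.fromRel (fun i j => i = 0 ∧ j = 1)

end IndPaper


section Aux

open IndPaper Finset Filter

variable {t : ℕ} {H : SimpleGraph (Fin t)}

namespace IndAux

/-- The pull of an injective map is isomorphic to the induced subgraph on the image. -/
noncomputable def pullIsoInduce {V : Type*} [DecidableEq V] (G : SimpleGraph V)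
    (f : Fin t → V) (hf : Function.Injective f) :
    pull G f ≃g G.induce (↑(Finset.image f Finset.univ) : Set V) where
  toEquiv := Equiv.ofBijective (fun i => ⟨f i, by simp⟩)
    ⟨fun a b h => hf (congrArg Subtype.val h), by
      rintro ⟨x, hx⟩
      simp only [Finset.coe_image, Set.mem_image, Finset.mem_coe, Finset.mem_univ,
        true_and, Finset.coe_univ, Set.image_univ, Set.mem_range] at hx
      obtain ⟨i, rfl⟩ := hx
      exact ⟨i, rfl⟩⟩
  map_rel_iff' := Iff.rfl

lemma nonempty_iso_induce_image {V : Type*} [DecidableEq V] (G : SimpleGraph V)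
    (f : Fin t → V) (hf : Function.Injective f) :
    Nonempty (pull G f ≃g H) ↔
      Nonempty (G.induce (↑(Finset.image f Finset.univ) : Set V) ≃g H) :=
  ⟨fun ⟨e⟩ => ⟨(pullIsoInduce G f hf).symm.trans e⟩,
   fun ⟨e⟩ => ⟨(pullIsoInduce G f hf).trans e⟩⟩

lemma card_image_univ {V : Type*} [DecidableEq V] (f : Fin t → V)
    (hf : Function.Injective f) : (Finset.image f Finset.univ).card = t := by
  rw [Finset.card_image_of_injective _ hf, Finset.card_univ, Fintype.card_fin]

lemma card_equiv_fin_coe {V : Type*} [DecidableEq V] {s : Finset V} (hst : s.card = t) :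
    Nat.card (Fin t ≃ {x // x ∈ s}) = t.factorial := by
  have e0 : {x // x ∈ s} ≃ Fin t :=
    Fintype.equivFinOfCardEq (by rw [Fintype.card_coe, hst])
  rw [Nat.card_congr (Equiv.equivCongr (Equiv.refl (Fin t)) e0),
    show Nat.card (Fin t ≃ Fin t) = Nat.card (Equiv.Perm (Fin t)) from rfl,
    Nat.card_eq_fintype_card, Fintype.card_perm, Fintype.card_fin]

/-- Counting labeled injective copies: `N_inj = N_sub * t!`. -/
lemma card_inj_eq {V : Type*} [Fintype V] (G : SimpleGraph V) :
    Nat.card {f : Fin t → V // Function.Injective f ∧ Nonempty (pull G f ≃g H)}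
      = Nat.card {s : Finset V // s.card = t ∧
          Nonempty (G.induce (↑s : Set V) ≃g H)} * t.factorial := by
  classical
  set A : Finset (Fin t → V) :=
    Finset.univ.filter (fun f => Function.Injective f ∧ Nonempty (pull G f ≃g H)) with hA
  set B : Finset (Finset V) :=
    Finset.univ.filter (fun s => s.card = t ∧ Nonempty (G.induce (↑s : Set V) ≃g H)) with hB
  have hAcard : Nat.card {f : Fin t → V // Function.Injective f ∧ Nonempty (pull G f ≃g H)}
      = A.card := by
    rw [Nat.card_eq_fintype_card, Fintype.card_subtype]
  have hBcard : Nat.card {s : Finset V // s.card = t ∧ Nonempty (G.induce (↑s : Set V) ≃g H)}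
      = B.card := by
    rw [Nat.card_eq_fintype_card, Fintype.card_subtype]
  rw [hAcard, hBcard]
  have hmap : ∀ f ∈ A, Finset.image f Finset.univ ∈ B := by
    intro f hf
    rw [hA, Finset.mem_filter] at hf
    rw [hB, Finset.mem_filter]
    exact ⟨Finset.mem_univ _, card_image_univ f hf.2.1,
      (nonempty_iso_induce_image G f hf.2.1).1 hf.2.2⟩
  rw [Finset.card_eq_sum_card_fiberwise hmap]
  have hfiber : ∀ s ∈ B, (A.filter (fun f => Finset.image f Finset.univ = s)).card
      = t.factorial := by
    intro s hs
    rw [hB, Finset.mem_filter] at hs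
    obtain ⟨-, hst, hsiso⟩ := hs
    have hcoe : (A.filter (fun f => Finset.image f Finset.univ = s)).card
        = Nat.card {f : Fin t → V // f ∈ A.filter (fun f => Finset.image f Finset.univ = s)} := by
      rw [Nat.card_eq_fintype_card, Fintype.card_coe]
    rw [hcoe, ← card_equiv_fin_coe (s := s) hst]
    refine Nat.card_congr ?_
    have hmem : ∀ (F : {f : Fin t → V // f ∈ A.filter (fun f => Finset.image f Finset.univ = s)})
        (i : Fin t), F.1 i ∈ s := by
      intro F i
      have h := Finset.mem_filter.mp F.2
      have h2 := Finset.mem_image_of_mem F.1 (Finset.mem_univ i)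
      rwa [h.2] at h2
    have hinjF : ∀ (F : {f : Fin t → V // f ∈ A.filter (fun f => Finset.image f Finset.univ = s)}),
        Function.Injective F.1 := by
      intro F
      have h := Finset.mem_filter.mp (Finset.mem_filter.mp F.2).1
      exact h.2.1
    refine
      { toFun := fun F => Equiv.ofBijective (fun i => (⟨F.1 i, hmem F i⟩ : {x // x ∈ s}))
          ⟨fun a b h => hinjF F (congrArg Subtype.val h), ?_⟩,
        invFun := fun b => ⟨fun i => ((b i : {x // x ∈ s}) : V), ?_⟩,
        left_inv := fun F => Subtype.ext (funext fun i => rfl),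
        right_inv := fun b => Equiv.ext fun i => Subtype.ext rfl }
    · -- surjectivity
      rintro ⟨x, hx⟩
      have h := Finset.mem_filter.mp F.2
      rw [← h.2] at hx
      obtain ⟨i, -, rfl⟩ := Finset.mem_image.mp hx
      exact ⟨i, rfl⟩
    · -- membership of the inverse
      have hinj : Function.Injective (fun i => ((b i : {x // x ∈ s}) : V)) := by
        intro a a' h
        exact b.injective (Subtype.ext h)
      have himg : Finset.image (fun i => ((b i : {x // x ∈ s}) : V)) Finset.univ = s := by
        ext x
        simp only [Finset.mem_image, Finset.mem_univ, true_and]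
        constructor
        · rintro ⟨i, rfl⟩; exact (b i).2
        · intro hx; exact ⟨b.symm ⟨x, hx⟩, by simp⟩
      have hiso : Nonempty (pull G (fun i => ((b i : {x // x ∈ s}) : V)) ≃g H) := by
        rw [nonempty_iso_induce_image _ _ hinj, himg]
        exact hsiso
      rw [Finset.mem_filter, hA, Finset.mem_filter]
      exact ⟨⟨Finset.mem_univ _, hinj, hiso⟩, himg⟩
  rw [Finset.sum_congr rfl hfiber, Finset.sum_const, smul_eq_mul]

lemma card_injective_fns {V : Type*} [Fintype V] :
    Nat.card {f : Fin t → V // Function.Injective f}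
      = (Fintype.card V).descFactorial t := by
  classical
  rw [Nat.card_congr (Equiv.subtypeInjectiveEquivEmbedding (Fin t) V),
    Nat.card_eq_fintype_card, Fintype.card_embedding_eq, Fintype.card_fin]

lemma card_rep_le {V : Type*} [Fintype V] (G : SimpleGraph V) :
    Nat.card {f : Fin t → V // Nonempty (pull G f ≃g H)}
      ≤ Nat.card {f : Fin t → V // Function.Injective f ∧ Nonempty (pull G f ≃g H)}
        + (Fintype.card V ^ t - (Fintype.card V).descFactorial t) := by
  classical
  have hsplit : Nat.card {f : Fin t → V // Nonempty (pull G f ≃g H)}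
      = Nat.card {f : Fin t → V // Nonempty (pull G f ≃g H) ∧ Function.Injective f}
        + Nat.card {f : Fin t → V // Nonempty (pull G f ≃g H) ∧ ¬ Function.Injective f} := by
    rw [← Nat.card_sum]
    refine Nat.card_congr ?_
    exact ((Equiv.sumCompl (fun x : {f : Fin t → V // Nonempty (pull G f ≃g H)} =>
        Function.Injective x.1)).symm.trans
      (Equiv.sumCongr
        (Equiv.subtypeSubtypeEquivSubtypeInter
          (fun f : Fin t → V => Nonempty (pull G f ≃g H)) (fun f => Function.Injective f))
        (Equiv.subtypeSubtypeEquivSubtypeInter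
          (fun f : Fin t → V => Nonempty (pull G f ≃g H)) (fun f => ¬ Function.Injective f))))
  have h1 : Nat.card {f : Fin t → V // Nonempty (pull G f ≃g H) ∧ Function.Injective f}
      = Nat.card {f : Fin t → V // Function.Injective f ∧ Nonempty (pull G f ≃g H)} :=
    Nat.card_congr (Equiv.subtypeEquivRight fun f => and_comm)
  have h2 : Nat.card {f : Fin t → V // Nonempty (pull G f ≃g H) ∧ ¬ Function.Injective f}
      ≤ Nat.card {f : Fin t → V // ¬ Function.Injective f} :=
    Nat.card_le_card_of_injective (fun x => ⟨x.1, x.2.2⟩)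
      (by intro a b hab; have := congrArg Subtype.val hab; exact Subtype.ext this)
  have h3 : Nat.card {f : Fin t → V // Function.Injective f}
      + Nat.card {f : Fin t → V // ¬ Function.Injective f}
      = Fintype.card V ^ t := by
    rw [← Nat.card_sum, Nat.card_congr (Equiv.sumCompl _), Nat.card_fun,
      Nat.card_eq_fintype_card, Nat.card_eq_fintype_card, Fintype.card_fin]
  have h4 := card_injective_fns (t := t) (V := V)
  omega

lemma card_subsets_le {V : Type*} [Fintype V] (G : SimpleGraph V) :
    Nat.card {s : Finset V // s.card = t ∧ Nonempty (G.induce (↑s : Set V) ≃g H)}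
      ≤ (Fintype.card V).choose t := by
  classical
  calc Nat.card {s : Finset V // s.card = t ∧ Nonempty (G.induce (↑s : Set V) ≃g H)}
      ≤ Nat.card {s : Finset V // s.card = t} :=
        Nat.card_le_card_of_injective (fun x => ⟨x.1, x.2.1⟩)
          (by intro a b hab; have := congrArg Subtype.val hab; exact Subtype.ext this)
    _ = (Fintype.card V).choose t := by
        rw [Nat.card_eq_fintype_card, Fintype.card_finset_len]

lemma subsetDensity_nonneg {V : Type*} [Fintype V] (G : SimpleGraph V) :
    0 ≤ subsetDensity H G :=
  div_nonneg (Nat.cast_nonneg _) (Nat.cast_nonneg _)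

lemma subsetDensity_le_one {V : Type*} [Fintype V] (G : SimpleGraph V) :
    subsetDensity H G ≤ 1 := by
  unfold subsetDensity
  rcases Nat.eq_zero_or_pos ((Fintype.card V).choose t) with h | h
  · have := card_subsets_le (H := H) G
    rw [h] at this
    simp [Nat.le_zero.mp this]
  · rw [div_le_one (by exact_mod_cast h)]
    exact_mod_cast card_subsets_le (H := H) G

lemma subsetDensity_congr {V W : Type*} [Fintype V] [Fintype W]
    {G : SimpleGraph V} {G' : SimpleGraph W} (e : G ≃g G') :
    subsetDensity H G = subsetDensity H G' := by
  classical
  have hcard : Fintype.card V = Fintype.card W := Fintype.card_congr e.toEquiv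
  have hmem : ∀ (s : Finset V) (x : V),
      x ∈ (↑s : Set V) ↔ e.toEquiv x ∈ (↑(s.map e.toEquiv.toEmbedding) : Set W) := by
    intro s x
    simp [Finset.mem_map_equiv]
  have hiso : ∀ s : Finset V,
      (G.induce (↑s : Set V)) ≃g (G'.induce (↑(s.map e.toEquiv.toEmbedding) : Set W)) := by
    intro s
    exact { toEquiv := e.toEquiv.subtypeEquiv (hmem s),
            map_rel_iff' := by intro a b; exact e.map_rel_iff }
  have hNat : Nat.card {s : Finset V // s.card = t ∧ Nonempty (G.induce (↑s : Set V) ≃g H)}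
      = Nat.card {s : Finset W // s.card = t ∧ Nonempty (G'.induce (↑s : Set W) ≃g H)} := by
    refine Nat.card_congr (Equiv.subtypeEquiv e.toEquiv.finsetCongr fun s => ?_)
    rw [Equiv.finsetCongr_apply, Finset.card_map]
    refine and_congr Iff.rfl ?_
    exact ⟨fun ⟨i⟩ => ⟨(hiso s).symm.trans i⟩, fun ⟨i⟩ => ⟨(hiso s).trans i⟩⟩
  unfold subsetDensity
  rw [hcard, hNat]

lemma bddAbove_densSet {k : ℕ} :
    BddAbove {x : ℝ | ∃ G' : SimpleGraph (Fin k), x = subsetDensity H G'} :=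
  ⟨1, by rintro x ⟨G', rfl⟩; exact subsetDensity_le_one G'⟩

lemma bddBelow_densSet {k : ℕ} :
    BddBelow {x : ℝ | ∃ G' : SimpleGraph (Fin k), x = subsetDensity H G'} :=
  ⟨0, by rintro x ⟨G', rfl⟩; exact subsetDensity_nonneg G'⟩

lemma densSet_nonempty {k : ℕ} :
    {x : ℝ | ∃ G' : SimpleGraph (Fin k), x = subsetDensity H G'}.Nonempty :=
  ⟨subsetDensity H (⊥ : SimpleGraph (Fin k)), ⟨⊥, rfl⟩⟩

lemma minDensity_le {k : ℕ} (G' : SimpleGraph (Fin k)) :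
    minDensity H k ≤ subsetDensity H G' :=
  csInf_le bddBelow_densSet ⟨G', rfl⟩

lemma le_maxDensity {k : ℕ} (G' : SimpleGraph (Fin k)) :
    subsetDensity H G' ≤ maxDensity H k :=
  le_csSup bddAbove_densSet ⟨G', rfl⟩

lemma minDensity_nonneg {k : ℕ} : 0 ≤ minDensity H k :=
  le_csInf densSet_nonempty (by rintro x ⟨G', rfl⟩; exact subsetDensity_nonneg G')

lemma maxDensity_le_one {k : ℕ} : maxDensity H k ≤ 1 :=
  csSup_le densSet_nonempty (by rintro x ⟨G', rfl⟩; exact subsetDensity_le_one G')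

lemma pow_sub_le_descFactorial (n : ℕ) : ∀ k : ℕ, (n - k) ^ k ≤ n.descFactorial k
  | 0 => by simp
  | k + 1 => by
      rw [Nat.descFactorial_succ, pow_succ, mul_comm (n - k)]
      exact Nat.mul_le_mul
        (le_trans (Nat.pow_le_pow_left (by omega) k) (pow_sub_le_descFactorial n k))
        (by omega)

lemma repDensity_blowUp {V : Type*} [Fintype V] [Nonempty V] (G : SimpleGraph V)
    {m : ℕ} (hm : 0 < m) :
    repDensity H (blowUp G m) = repDensity H G := by
  classical
  have e : {f : Fin t → V × Fin m // Nonempty (pull (blowUp G m) f ≃g H)}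
      ≃ {g : Fin t → V // Nonempty (pull G g ≃g H)} × (Fin t → Fin m) :=
    { toFun := fun f => (⟨fun i => (f.1 i).1, f.2⟩, fun i => (f.1 i).2),
      invFun := fun p => ⟨fun i => (p.1.1 i, p.2 i), p.1.2⟩,
      left_inv := fun f => rfl,
      right_inv := fun p => rfl }
  unfold repDensity
  rw [Nat.card_congr e, Nat.card_prod, Nat.card_fun]
  simp only [Nat.card_eq_fintype_card, Fintype.card_fin, Fintype.card_prod]
  have hn : (0 : ℝ) < (Fintype.card V : ℝ) := by exact_mod_cast Fintype.card_pos
  have hm' : (0 : ℝ) < (m : ℝ) := by exact_mod_cast hm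
  push_cast
  rw [mul_pow]
  field_simp

/-- Core estimate: `|R(H,G) - P(H,G)| ≤ 1 - D/P`. -/
lemma abs_rep_sub_subset {W : Type*} [Fintype W] (G : SimpleGraph W)
    (htn : t ≤ Fintype.card W) :
    |repDensity H G - subsetDensity H G| ≤
      1 - ((Fintype.card W).descFactorial t : ℝ) / ((Fintype.card W : ℝ) ^ t) := by
  classical
  set n := Fintype.card W with hn
  set D : ℕ := n.descFactorial t with hD
  set P : ℕ := n ^ t with hP
  set Ninj : ℕ :=
    Nat.card {f : Fin t → W // Function.Injective f ∧ Nonempty (pull G f ≃g H)} with hNinj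
  set Nsub : ℕ :=
    Nat.card {s : Finset W // s.card = t ∧ Nonempty (G.induce (↑s : Set W) ≃g H)} with hNsub
  set Nrep : ℕ := Nat.card {f : Fin t → W // Nonempty (pull G f ≃g H)} with hNrep
  have hDpos : 0 < D := by
    rw [hD]; exact Nat.pos_of_ne_zero (by
      intro h0; exact absurd (Nat.descFactorial_eq_zero_iff_lt.mp h0) (not_lt.2 htn))
  have hDP : D ≤ P := Nat.descFactorial_le_pow n t
  have hPpos : 0 < P := lt_of_lt_of_le hDpos hDP
  have hDC : D = t.factorial * n.choose t := Nat.descFactorial_eq_factorial_mul_choose n t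
  have hInjEq : Ninj = Nsub * t.factorial := card_inj_eq G
  have hsub_eq : subsetDensity H G = (Ninj : ℝ) / (D : ℝ) := by
    unfold subsetDensity
    rw [hInjEq, hDC]
    push_cast
    rw [mul_comm (t.factorial : ℝ) (n.choose t : ℝ)]
    rcases Nat.eq_zero_or_pos (n.choose t) with h | h
    · exfalso; rw [hDC, h, mul_zero] at hDpos; exact lt_irrefl 0 hDpos
    · rw [mul_div_mul_right _ _ (by exact_mod_cast t.factorial_ne_zero),
        ← hn]
  have hrep_eq : repDensity H G = (Nrep : ℝ) / (P : ℝ) := by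
    unfold repDensity
    rw [← hn, hP]
    push_cast
    rfl
  have hIR : Ninj ≤ Nrep :=
    Nat.card_le_card_of_injective (fun x => ⟨x.1, x.2.2⟩)
      (by intro a b hab; have := congrArg Subtype.val hab; exact Subtype.ext this)
  have hID : Ninj ≤ D := by
    rw [hNinj, hD, ← card_injective_fns (t := t) (V := W)]
    exact Nat.card_le_card_of_injective (fun x => ⟨x.1, x.2.1⟩)
      (by intro a b hab; have := congrArg Subtype.val hab; exact Subtype.ext this)
  have hRB : Nrep ≤ Ninj + (P - D) := card_rep_le G
  -- real versions
  have rD : (0 : ℝ) < (D : ℝ) := by exact_mod_cast hDpos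
  have rP : (0 : ℝ) < (P : ℝ) := by exact_mod_cast hPpos
  have rDP : (D : ℝ) ≤ (P : ℝ) := by exact_mod_cast hDP
  have rIR : (Ninj : ℝ) ≤ (Nrep : ℝ) := by exact_mod_cast hIR
  have rID : (Ninj : ℝ) ≤ (D : ℝ) := by exact_mod_cast hID
  have rRB : (Nrep : ℝ) ≤ (Ninj : ℝ) + ((P : ℝ) - (D : ℝ)) := by
    have : (Nrep : ℝ) ≤ ((Ninj + (P - D) : ℕ) : ℝ) := by exact_mod_cast hRB
    rwa [Nat.cast_add, Nat.cast_sub hDP] at this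
  have hPcast : ((n : ℝ)) ^ t = ((P : ℕ) : ℝ) := by rw [hP]; push_cast; ring
  rw [hsub_eq, hrep_eq, hPcast, abs_sub_le_iff]
  have hPD : ((P : ℝ) - D) / P = 1 - (D : ℝ) / P := by field_simp
  constructor
  · have h1 : (Nrep : ℝ) / P ≤ (Ninj : ℝ) / P + ((P : ℝ) - D) / P := by
      rw [← add_div]
      apply div_le_div_of_nonneg_right (by linarith) rP.le
    have h2 : (Ninj : ℝ) / P ≤ (Ninj : ℝ) / D :=
      div_le_div_of_nonneg_left (Nat.cast_nonneg _) rD rDP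
    linarith
  · have h1 : (Ninj : ℝ) / P ≤ (Nrep : ℝ) / P := div_le_div_of_nonneg_right rIR rP.le
    have h2 : ((D : ℝ) - Ninj) / P ≤ ((D : ℝ) - Ninj) / D :=
      div_le_div_of_nonneg_left (by linarith) rD rDP
    have h3 : (Ninj : ℝ) / D + ((D : ℝ) - Ninj) / D = 1 := by field_simp; ring
    have h4 : (Ninj : ℝ) / D - (Ninj : ℝ) / P = ((D : ℝ) - Ninj) / P - ((D : ℝ) - Ninj) / P
        + ((Ninj : ℝ) / D - (Ninj : ℝ) / P) := by ring
    -- combine: Ninj/D - Nrep/P ≤ Ninj/D - Ninj/P ≤ 1 - D/P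
    have h5 : (Ninj : ℝ) / D - (Ninj : ℝ) / P ≤ 1 - (D : ℝ) / P := by
      have e1 : (Ninj : ℝ) / D = 1 - ((D : ℝ) - Ninj) / D := by
        rw [← h3]; ring
      have e2 : (D : ℝ) / P = (Ninj : ℝ) / P + ((D : ℝ) - Ninj) / P := by
        rw [← add_div]; ring_nf
      rw [e1, e2]
      linarith
    linarith

lemma one_sub_ratio_le {N : ℕ} (htN : t ≤ N) (hN : 1 ≤ N) :
    1 - ((N.descFactorial t : ℝ)) / ((N : ℝ) ^ t) ≤ (t : ℝ) ^ 2 / (N : ℝ) := by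
  have hNpos : (0 : ℝ) < (N : ℝ) := by exact_mod_cast hN
  have hcast : ((N - t : ℕ) : ℝ) = (N : ℝ) - (t : ℝ) := Nat.cast_sub htN
  have hdesc : ((N - t) ^ t : ℕ) ≤ N.descFactorial t := pow_sub_le_descFactorial N t
  have h1 : ((N : ℝ) - t) ^ t / (N : ℝ) ^ t ≤ (N.descFactorial t : ℝ) / (N : ℝ) ^ t := by
    apply div_le_div_of_nonneg_right _ (by positivity)
    calc ((N : ℝ) - t) ^ t = (((N - t) ^ t : ℕ) : ℝ) := by rw [Nat.cast_pow, hcast]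
      _ ≤ (N.descFactorial t : ℝ) := by exact_mod_cast hdesc
  have h2 : ((N : ℝ) - t) ^ t / (N : ℝ) ^ t = (1 - (t : ℝ) / N) ^ t := by
    rw [← div_pow]
    congr 1
    field_simp
  have h3 : 1 - (t : ℝ) ^ 2 / N ≤ (1 - (t : ℝ) / N) ^ t := by
    have htN' : (t : ℝ) / N ≤ 1 := by
      rw [div_le_one hNpos]; exact_mod_cast htN
    have hB := one_add_mul_le_pow (a := -((t : ℝ) / N)) (by linarith) t
    calc 1 - (t : ℝ) ^ 2 / N = 1 + (t : ℝ) * (-((t : ℝ) / N)) := by ring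
      _ ≤ (1 + -((t : ℝ) / N)) ^ t := hB
      _ = (1 - (t : ℝ) / N) ^ t := by ring_nf
  have h4 : (1 - (t : ℝ) / N) ^ t ≤ (N.descFactorial t : ℝ) / (N : ℝ) ^ t := by
    rw [← h2]; exact h1
  linarith

lemma exists_graph_on_fin {W : Type*} [Fintype W] (G : SimpleGraph W) :
    ∃ G' : SimpleGraph (Fin (Fintype.card W)), subsetDensity H G' = subsetDensity H G := by
  classical
  let e : W ≃ Fin (Fintype.card W) := Fintype.equivFin W
  exact ⟨G.comap e.symm.toEmbedding, subsetDensity_congr (SimpleGraph.Iso.comap e.symm G)⟩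

end IndAux

end Aux


open IndPaper in
/-- For every graph `H` on `t ≥ 1` vertices and every finite nonempty graph `G`,
`i(H) ≤ R(H,G) ≤ I(H)`. -/
theorem minInducibility_le_repDensity_le_inducibility
    {t : ℕ} (ht : 1 ≤ t) (H : SimpleGraph (Fin t))
    {V : Type} [Fintype V] [Nonempty V] (G : SimpleGraph V) :
    minInducibility H ≤ repDensity H G ∧ repDensity H G ≤ inducibility H := by
  classical
  open IndAux in
  set r := repDensity H G with hr
  have key : ∀ ε : ℝ, 0 < ε → ∀ M : ℕ, ∃ k ≥ M,
      minDensity H k ≤ r + ε ∧ r - ε ≤ maxDensity H k := by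
    intro ε hε M
    set m : ℕ := max (max M t) (⌈(t : ℝ) ^ 2 / ε⌉₊) + 1 with hm
    have hm1 : 1 ≤ m := by omega
    have hmM : M ≤ m := by
      have := le_max_left M t
      have := le_max_left (max M t) (⌈(t : ℝ) ^ 2 / ε⌉₊)
      omega
    have hmt : t ≤ m := by
      have := le_max_right M t
      have := le_max_left (max M t) (⌈(t : ℝ) ^ 2 / ε⌉₊)
      omega
    have hmpos : (0 : ℝ) < (m : ℝ) := by exact_mod_cast hm1
    have hmε : (t : ℝ) ^ 2 / (m : ℝ) ≤ ε := by
      have hceil : (t : ℝ) ^ 2 / ε ≤ (⌈(t : ℝ) ^ 2 / ε⌉₊ : ℝ) := Nat.le_ceil _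
      have hmm : ((⌈(t : ℝ) ^ 2 / ε⌉₊ : ℕ) : ℝ) ≤ (m : ℝ) := by
        have h1 : (⌈(t : ℝ) ^ 2 / ε⌉₊ : ℕ) ≤ m := by
          have := le_max_right (max M t) (⌈(t : ℝ) ^ 2 / ε⌉₊)
          omega
        exact_mod_cast h1
      rw [div_le_iff₀ hmpos]
      rw [div_le_iff₀ hε] at hceil
      have : ((⌈(t : ℝ) ^ 2 / ε⌉₊ : ℕ) : ℝ) * ε ≤ (m : ℝ) * ε :=
        mul_le_mul_of_nonneg_right hmm hε.le
      calc (t : ℝ) ^ 2 ≤ ((⌈(t : ℝ) ^ 2 / ε⌉₊ : ℕ) : ℝ) * ε := hceil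
        _ ≤ (m : ℝ) * ε := this
        _ = ε * (m : ℝ) := by ring
    set k := Fintype.card (V × Fin m) with hk
    have hkval : k = Fintype.card V * m := by
      rw [hk, Fintype.card_prod, Fintype.card_fin]
    have hVpos : 1 ≤ Fintype.card V := Fintype.card_pos
    have hmk : m ≤ k := by
      rw [hkval]
      calc m = 1 * m := (one_mul m).symm
        _ ≤ Fintype.card V * m := Nat.mul_le_mul_right m hVpos
    have hkM : M ≤ k := le_trans hmM hmk
    have hkt : t ≤ k := le_trans hmt hmk
    have hk1 : 1 ≤ k := le_trans hm1 hmk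
    have hrepeq : repDensity H (blowUp G m) = r := repDensity_blowUp G (by omega)
    have hest := abs_rep_sub_subset (H := H) (blowUp G m) (by rw [← hk]; exact hkt)
    rw [← hk] at hest
    have hratio := one_sub_ratio_le (t := t) (N := k) hkt hk1
    have hsmall : (t : ℝ) ^ 2 / (k : ℝ) ≤ (t : ℝ) ^ 2 / (m : ℝ) :=
      div_le_div_of_nonneg_left (by positivity) hmpos (by exact_mod_cast hmk)
    have habs : |r - subsetDensity H (blowUp G m)| ≤ ε := by
      rw [← hrepeq]
      exact le_trans hest (le_trans hratio (le_trans hsmall hmε))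
    obtain ⟨G', hG'⟩ := exists_graph_on_fin (H := H) (blowUp G m)
    have habs' := abs_le.mp habs
    refine ⟨k, hkM, ?_, ?_⟩
    · calc minDensity H k ≤ subsetDensity H G' := minDensity_le G'
        _ = subsetDensity H (blowUp G m) := hG'
        _ ≤ r + ε := by linarith [habs'.1]
    · calc r - ε ≤ subsetDensity H (blowUp G m) := by linarith [habs'.2]
        _ = subsetDensity H G' := hG'.symm
        _ ≤ maxDensity H k := le_maxDensity G'
  constructor
  · have hb : Filter.IsBoundedUnder (· ≥ ·) Filter.atTop (fun n => minDensity H n) :=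
      Filter.isBoundedUnder_of ⟨0, fun k => minDensity_nonneg⟩
    have hstep : ∀ ε : ℝ, 0 < ε → minInducibility H ≤ r + ε := by
      intro ε hε
      exact Filter.liminf_le_of_frequently_le
        (Filter.frequently_atTop.mpr fun M => by
          obtain ⟨k, hk1, hk2, _⟩ := key ε hε M
          exact ⟨k, hk1, hk2⟩) hb
    by_contra hcon
    push_neg at hcon
    have := hstep ((minInducibility H - r) / 2) (by linarith)
    linarith
  · have hb : Filter.IsBoundedUnder (· ≤ ·) Filter.atTop (fun n => maxDensity H n) :=
      Filter.isBoundedUnder_of ⟨1, fun k => maxDensity_le_one⟩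
    have hstep : ∀ ε : ℝ, 0 < ε → r - ε ≤ inducibility H := by
      intro ε hε
      exact Filter.le_limsup_of_frequently_le
        (Filter.frequently_atTop.mpr fun M => by
          obtain ⟨k, hk1, _, hk3⟩ := key ε hε M
          exact ⟨k, hk1, hk3⟩) hb
    by_contra hcon
    push_neg at hcon
    have := hstep ((r - inducibility H) / 2) (by linarith)
    linarith
end

section
/- For all integers s, t ≥ 2, with m = min(s,t), there exists a bilinear map B : R^{L_m} × R^{L_t} → R^{L_t}, where L_j denotes the (finite) set of labeled graphs on {1,…,j}, such that for every finite simple graph G on exactly s vertices and every finite nonempty simple graph G', the labeled t-profile of the composition satisfies r_t(G ⊙ G') = B(p_m(G), r_t(G')); here r_t and p_m denote the vectors (r(H, G⊙G'))_{H ∈ L_t} and (p(H,G))_{H ∈ L_m}. -/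
open Filter Topology SimpleGraph

namespace IndAux
open IndPaper Finset Function
open scoped Classical

open IndPaper Finset Function
open scoped Classical

variable {t : ℕ}

@[simp] lemma pull_adj {V : Type*} {t : ℕ} (G : SimpleGraph V) (f : Fin t → V) (i j : Fin t) :
    (pull G f).Adj i j ↔ G.Adj (f i) (f j) := Iff.rfl

/-- position of the first occurrence of the value `g i`. -/
noncomputable def fo {α : Type*} (g : Fin t → α) (i : Fin t) : Fin t :=
  (univ.filter fun j => g j = g i).min' ⟨i, by simp⟩

lemma fo_spec {α : Type*} (g : Fin t → α) (i : Fin t) : g (fo g i) = g i := by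
  have := Finset.min'_mem (univ.filter fun j => g j = g i) ⟨i, by simp⟩
  exact (Finset.mem_filter.mp this).2

lemma fo_min {α : Type*} (g : Fin t → α) {i j : Fin t} (h : g j = g i) : fo g i ≤ j :=
  Finset.min'_le _ _ (by simp [h])

lemma fo_congr_arg {α : Type*} (g : Fin t → α) {i j : Fin t} (h : g i = g j) :
    fo g i = fo g j :=
  le_antisymm (fo_min g ((fo_spec g j).trans h.symm)) (fo_min g ((fo_spec g i).trans h))

lemma fo_eq_iff {α : Type*} (g : Fin t → α) {i j : Fin t} : fo g i = fo g j ↔ g i = g j := by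
  constructor
  · intro h; exact (fo_spec g i).symm.trans ((congrArg g h).trans (fo_spec g j))
  · exact fo_congr_arg g

lemma fo_fo {α : Type*} (g : Fin t → α) (i : Fin t) : fo g (fo g i) = fo g i :=
  fo_congr_arg g (fo_spec g i)

lemma fo_congr {α β : Type*} {g : Fin t → α} {g' : Fin t → β}
    (h : ∀ a b, g a = g b ↔ g' a = g' b) : fo g = fo g' := by
  funext i
  exact le_antisymm (fo_min g ((h _ _).mpr (fo_spec g' i))) (fo_min g' ((h _ _).mp (fo_spec g i)))

/-- number of distinct values of `g` first occurring strictly before the first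
occurrence of `g i`. -/
noncomputable def canon {α : Type*} (g : Fin t → α) (i : Fin t) : ℕ :=
  (univ.filter fun j => fo g j = j ∧ j < fo g i).card

lemma canon_congr {α β : Type*} {g : Fin t → α} {g' : Fin t → β}
    (h : ∀ a b, g a = g b ↔ g' a = g' b) : canon g = canon g' := by
  funext i; unfold canon; rw [fo_congr h]

lemma canon_lt_of_fo_lt {α : Type*} {g : Fin t → α} {i j : Fin t} (hij : fo g i < fo g j) :
    canon g i < canon g j := by
  apply Finset.card_lt_card
  constructor
  · intro a ha
    simp only [mem_filter, mem_univ, true_and] at ha ⊢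
    exact ⟨ha.1, ha.2.trans hij⟩
  · intro hsub
    have : fo g i ∈ univ.filter fun j' => fo g j' = j' ∧ j' < fo g j := by
      simp [fo_fo, hij]
    have := hsub this
    simp only [mem_filter, mem_univ, true_and] at this
    exact lt_irrefl _ this.2

lemma canon_eq_iff {α : Type*} {g : Fin t → α} {i j : Fin t} :
    canon g i = canon g j ↔ g i = g j := by
  constructor
  · intro h
    by_contra hne
    have hfo : fo g i ≠ fo g j := fun hc => hne ((fo_eq_iff g).mp hc)
    rcases lt_or_gt_of_ne hfo with hlt | hlt
    · exact absurd h (Nat.ne_of_lt (canon_lt_of_fo_lt hlt))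
    · exact absurd h.symm (Nat.ne_of_lt (canon_lt_of_fo_lt hlt))
  · intro h; unfold canon; rw [fo_congr_arg g h]

lemma canon_lt_card_image {α : Type*} [DecidableEq α] (g : Fin t → α) (i : Fin t) :
    canon g i < (univ.image g).card := by
  classical
  set S := univ.filter fun j => fo g j = j ∧ j < fo g i with hS
  have hinj : Set.InjOn g S := by
    intro a ha b hb hab
    simp only [hS, coe_filter, Set.mem_setOf_eq, mem_univ, true_and] at ha hb
    rw [← ha.1, ← hb.1]
    exact fo_congr_arg g hab
  have hcard : (S.image g).card = S.card := Finset.card_image_of_injOn hinj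
  have hnot : g i ∉ S.image g := by
    intro hmem
    rcases Finset.mem_image.mp hmem with ⟨a, ha, hga⟩
    simp only [hS, mem_filter, mem_univ, true_and] at ha
    have : fo g a = fo g i := fo_congr_arg g hga
    rw [ha.1] at this
    rw [this] at ha
    exact lt_irrefl _ ha.2
  have hsub : insert (g i) (S.image g) ⊆ univ.image g := by
    intro x hx
    rcases Finset.mem_insert.mp hx with hx | hx
    · exact hx ▸ Finset.mem_image_of_mem g (mem_univ i)
    · rcases Finset.mem_image.mp hx with ⟨a, _, ha⟩
      exact ha ▸ Finset.mem_image_of_mem g (mem_univ a)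
  calc canon g i = S.card := rfl
    _ < (insert (g i) (S.image g)).card := by
        rw [Finset.card_insert_of_notMem hnot, hcard]; omega
    _ ≤ (univ.image g).card := Finset.card_le_card hsub





/-- classification of a filtered count by the value of `F`. -/
lemma card_filter_comp {α β : Type*} [Fintype α] [Fintype β] (F : α → β) (R : α → Prop)
    (Q : β → Prop) :
    (univ.filter fun a => R a ∧ Q (F a)).card
      = ∑ b : β, if Q b then (univ.filter fun a => R a ∧ F a = b).card else 0 := by
  rw [Finset.card_eq_sum_card_fiberwise (f := F) (t := univ) (fun x _ => mem_univ (F x))]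
  refine Finset.sum_congr rfl fun b _ => ?_
  rw [Finset.filter_filter]
  by_cases hb : Q b
  · rw [if_pos hb]
    congr 1
    ext a
    simp only [mem_filter, mem_univ, true_and]
    constructor
    · rintro ⟨⟨hR, _⟩, hF⟩; exact ⟨hR, hF⟩
    · rintro ⟨hR, hF⟩; exact ⟨⟨hR, hF ▸ hb⟩, hF⟩
  · rw [if_neg hb, Finset.card_eq_zero]
    ext a
    simp only [mem_filter, mem_univ, true_and, notMem_empty, iff_false]
    rintro ⟨⟨_, hQ⟩, hF⟩
    exact hb (hF ▸ hQ)

noncomputable def pick {n : ℕ} {w : Fin t → Fin n} {a : Fin n} (h : a ∈ univ.image w) : Fin t :=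
  (Finset.mem_image.mp h).choose

lemma pick_spec {n : ℕ} {w : Fin t → Fin n} {a : Fin n} (h : a ∈ univ.image w) :
    w (pick h) = a :=
  (Finset.mem_image.mp h).choose_spec.2

lemma card_image_eq_of_ker {p : ℕ} {w : Fin t → Fin p} {g : Fin t → Fin s}
    (hker : ∀ i j, w i = w j ↔ g i = g j) :
    (univ.image w).card = (univ.image g).card := by
  apply Finset.card_bij (fun a ha => g (pick ha))
  · intro a ha; exact Finset.mem_image_of_mem g (mem_univ _)
  · intro a ha a' ha' h
    rw [← pick_spec ha, ← pick_spec ha']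
    exact (hker _ _).mpr h
  · intro b hb
    rcases Finset.mem_image.mp hb with ⟨i, _, hi⟩
    refine ⟨w i, Finset.mem_image_of_mem w (mem_univ _), ?_⟩
    rw [(hker _ _).mp (pick_spec (Finset.mem_image_of_mem w (mem_univ i))), hi]

/-- the set of injective extensions of a partial injection prescribed by `u ∘ w = g`. -/
noncomputable def extEquiv {p : ℕ} (w : Fin t → Fin p) (g : Fin t → Fin s)
    (hker : ∀ i j, w i = w j ↔ g i = g j) :
    {u : Fin p → Fin s // Injective u ∧ u ∘ w = g} ≃
      (↥((univ.image w)ᶜ : Finset (Fin p)) ↪ ↥((univ.image g)ᶜ : Finset (Fin s))) where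
  toFun := fun ⟨u, hu, huw⟩ =>
    ⟨fun a => ⟨u a.1, by
      rw [Finset.mem_compl]
      intro hmem
      rcases Finset.mem_image.mp hmem with ⟨i, _, hi⟩
      have h2 : u (w i) = u a.1 := ((congrFun huw i : u (w i) = g i)).trans hi
      exact Finset.mem_compl.mp a.2 (hu h2 ▸ Finset.mem_image_of_mem w (mem_univ i))⟩,
     fun a b hab => Subtype.ext (hu (congrArg Subtype.val hab))⟩
  invFun := fun e =>
    ⟨fun a => if h : a ∈ univ.image w then g (pick h) else (e ⟨a, Finset.mem_compl.mpr h⟩).1,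
     by
      constructor
      · intro a b hab
        by_cases ha : a ∈ univ.image w <;> by_cases hb : b ∈ univ.image w
        · simp only [dif_pos ha, dif_pos hb] at hab
          rw [← pick_spec ha, ← pick_spec hb]
          exact (hker _ _).mpr hab
        · simp only [dif_pos ha, dif_neg hb] at hab
          exact absurd (hab ▸ Finset.mem_image_of_mem g (mem_univ _))
            (Finset.mem_compl.mp (e ⟨b, Finset.mem_compl.mpr hb⟩).2)
        · simp only [dif_neg ha, dif_pos hb] at hab
          exact absurd (hab.symm ▸ Finset.mem_image_of_mem g (mem_univ _))
            (Finset.mem_compl.mp (e ⟨a, Finset.mem_compl.mpr ha⟩).2)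
        · simp only [dif_neg ha, dif_neg hb] at hab
          have h3 := e.injective (Subtype.ext hab)
          exact congrArg Subtype.val h3
      · funext i
        have hw : w i ∈ univ.image w := Finset.mem_image_of_mem w (mem_univ i)
        simp only [comp_apply, dif_pos hw]
        exact (hker _ _).mp (pick_spec hw)⟩
  left_inv := fun ⟨u, hu, huw⟩ => by
    apply Subtype.ext
    funext a
    by_cases ha : a ∈ univ.image w
    · simp only [dif_pos ha]
      have h4 : u (w (pick ha)) = g (pick ha) := (congrFun huw (pick ha) : _)
      rw [← h4, pick_spec ha]
    · simp only [dif_neg ha, Function.Embedding.coeFn_mk]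
      rfl
  right_inv := fun e => by
    apply DFunLike.ext
    rintro ⟨a, ha⟩
    apply Subtype.ext
    exact dif_neg (Finset.mem_compl.mp ha)

lemma card_ext {p : ℕ} (w : Fin t → Fin p) (g : Fin t → Fin s)
    (hker : ∀ i j, w i = w j ↔ g i = g j) :
    (univ.filter fun u : Fin p → Fin s => Injective u ∧ u ∘ w = g).card
      = (s - (univ.image w).card).descFactorial (p - (univ.image w).card) := by
  rw [← Fintype.card_subtype, Fintype.card_congr (extEquiv w g hker),
    Fintype.card_embedding_eq, Fintype.card_coe, Fintype.card_coe,
    Finset.card_compl, Finset.card_compl, Fintype.card_fin, Fintype.card_fin,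
    card_image_eq_of_ker hker]


variable {s : ℕ}

lemma image_card_le (g : Fin t → Fin s) : (univ.image g).card ≤ min s t := by
  refine le_min ?_ ?_
  · calc (univ.image g).card ≤ (univ : Finset (Fin s)).card :=
        Finset.card_le_card (Finset.subset_univ _)
      _ = s := by simp
  · calc (univ.image g).card ≤ (univ : Finset (Fin t)).card := Finset.card_image_le
      _ = t := by simp

/-- canonical kernel-pattern of `g`, as a function into `Fin (min s t)`. -/
noncomputable def wof (g : Fin t → Fin s) (i : Fin t) : Fin (min s t) :=
  ⟨canon g i, lt_of_lt_of_le (canon_lt_card_image g i) (image_card_le g)⟩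

lemma wof_eq_iff {g : Fin t → Fin s} {i j : Fin t} : wof g i = wof g j ↔ g i = g j := by
  rw [Fin.ext_iff]
  exact canon_eq_iff

lemma canon_wof (g : Fin t → Fin s) : canon (wof g) = canon g :=
  canon_congr fun a b => wof_eq_iff

def isCanon (w : Fin t → Fin (min s t)) : Prop := ∀ i, (w i : ℕ) = canon w i

lemma isCanon_wof (g : Fin t → Fin s) : isCanon (wof g) := fun i => by
  show canon g i = canon (wof g) i
  rw [canon_wof]

lemma wof_comp {w : Fin t → Fin (min s t)} (hw : isCanon w)
    {u : Fin (min s t) → Fin s} (hu : Injective u) : wof (u ∘ w) = w := by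
  funext i
  apply Fin.ext
  show canon (u ∘ w) i = (w i : ℕ)
  rw [canon_congr (g' := w) fun a b => by simp [hu.eq_iff], hw i]

/-- the compatibility condition on the `G`-part of a sampled map. -/
def condA {n : ℕ} (K : SimpleGraph (Fin n)) (H H' : SimpleGraph (Fin t))
    (g : Fin t → Fin n) : Prop :=
  (∀ i j, g i ≠ g j → (K.Adj (g i) (g j) ↔ H.Adj i j)) ∧
  (∀ i j, g i = g j → (H'.Adj i j ↔ H.Adj i j))

lemma condA_comp {n n' : ℕ} (G : SimpleGraph (Fin n')) (H H' : SimpleGraph (Fin t))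
    {w : Fin t → Fin n} {u : Fin n → Fin n'} (hu : Injective u) :
    condA G H H' (u ∘ w) ↔ condA (pull G u) H H' w := by
  unfold condA
  simp only [comp_apply, pull_adj, ne_eq, hu.eq_iff]

lemma pull_comp_iff {V : Type*} (G : SimpleGraph (Fin s)) (G' : SimpleGraph V)
    (H : SimpleGraph (Fin t)) (g : Fin t → Fin s) (h : Fin t → V) :
    pull (comp G G') (fun i => (g i, h i)) = H ↔ condA G H (pull G' h) g := by
  constructor
  · intro hEq
    have hAdj : ∀ i j, (G.Adj (g i) (g j) ∨ (g i = g j ∧ G'.Adj (h i) (h j))) ↔ H.Adj i j :=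
      fun i j => iff_of_eq (congrFun (congrFun (congrArg SimpleGraph.Adj hEq) i) j)
    constructor
    · intro i j hne
      rw [← hAdj i j]
      simp [hne]
    · intro i j he
      rw [pull_adj, ← hAdj i j, he]
      simp [G.irrefl]
  · rintro ⟨h1, h2⟩
    ext i j
    show G.Adj (g i) (g j) ∨ (g i = g j ∧ G'.Adj (h i) (h j)) ↔ H.Adj i j
    by_cases he : g i = g j
    · rw [← h2 i j he, pull_adj]
      simp [he, G.irrefl]
    · rw [← h1 i j he]
      simp [he]

lemma step1 (G : SimpleGraph (Fin s)) {V : Type*} [Fintype V] (G' : SimpleGraph V)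
    (H : SimpleGraph (Fin t)) :
    Nat.card {f : Fin t → Fin s × V // pull (comp G G') f = H}
      = ∑ H' : SimpleGraph (Fin t),
          (univ.filter fun g : Fin t → Fin s => condA G H H' g).card *
          (univ.filter fun h : Fin t → V => pull G' h = H').card := by
  rw [Nat.card_eq_fintype_card]
  have e1 : {f : Fin t → Fin s × V // pull (comp G G') f = H}
      ≃ Σ g : Fin t → Fin s, {h : Fin t → V // condA G H (pull G' h) g} :=
    (Equiv.subtypeEquiv (Equiv.arrowProdEquivProdArrow _ _ _) fun f =>
        pull_comp_iff G G' H (fun i => (f i).1) (fun i => (f i).2)).trans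
      (Equiv.subtypeProdEquivSigmaSubtype fun g (h : Fin t → V) => condA G H (pull G' h) g)
  rw [Fintype.card_congr e1, Fintype.card_sigma]
  have e2 : ∀ g : Fin t → Fin s, Fintype.card {h : Fin t → V // condA G H (pull G' h) g}
      = ∑ H' : SimpleGraph (Fin t), if condA G H H' g
          then (univ.filter fun h : Fin t → V => pull G' h = H').card else 0 := by
    intro g
    rw [Fintype.card_subtype]
    have h5 := card_filter_comp (fun h : Fin t → V => pull G' h) (fun _ => True)
      (fun H' => condA G H H' g)
    simpa using h5
  calc ∑ g : Fin t → Fin s, Fintype.card {h : Fin t → V // condA G H (pull G' h) g}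
      = ∑ g : Fin t → Fin s, ∑ H' : SimpleGraph (Fin t), if condA G H H' g
          then (univ.filter fun h : Fin t → V => pull G' h = H').card else 0 :=
        Finset.sum_congr rfl fun g _ => e2 g
    _ = ∑ H' : SimpleGraph (Fin t), ∑ g : Fin t → Fin s, if condA G H H' g
          then (univ.filter fun h : Fin t → V => pull G' h = H').card else 0 :=
        Finset.sum_comm
    _ = _ := by
        refine Finset.sum_congr rfl fun H' _ => ?_
        rw [← Finset.sum_filter, Finset.sum_const, smul_eq_mul]

lemma step2a (G : SimpleGraph (Fin s)) (H H' : SimpleGraph (Fin t)) :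
    (univ.filter fun g : Fin t → Fin s => condA G H H' g).card
      = ∑ w : Fin t → Fin (min s t), if isCanon w
          then (univ.filter fun g : Fin t → Fin s => wof g = w ∧ condA G H H' g).card
          else 0 := by
  rw [Finset.card_eq_sum_card_fiberwise (f := wof) (t := univ) (fun g _ => mem_univ (wof g))]
  refine Finset.sum_congr rfl fun w _ => ?_
  rw [Finset.filter_filter]
  by_cases hw : isCanon w
  · rw [if_pos hw]
    congr 1
    ext g
    simp only [mem_filter, mem_univ, true_and, and_comm]
  · rw [if_neg hw, Finset.card_eq_zero]
    ext g
    simp only [mem_filter, mem_univ, true_and, notMem_empty, iff_false]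
    rintro ⟨_, hg⟩
    exact hw (hg ▸ isCanon_wof g)

/-- the number of non-injective extension choices. -/
noncomputable def ew (s t : ℕ) (w : Fin t → Fin (min s t)) : ℕ :=
  (s - (univ.image w).card).descFactorial (min s t - (univ.image w).card)

lemma ew_pos (w : Fin t → Fin (min s t)) : 0 < ew s t w := by
  have h := Nat.sub_le_sub_right (min_le_left s t) (univ.image w).card
  refine Nat.pos_of_ne_zero fun h0 => ?_
  rw [ew, Nat.descFactorial_eq_zero_iff_lt] at h0
  omega

lemma step2b (G : SimpleGraph (Fin s)) (H H' : SimpleGraph (Fin t))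
    {w : Fin t → Fin (min s t)} (hw : isCanon w) :
    (univ.filter fun u : Fin (min s t) → Fin s =>
        Injective u ∧ condA G H H' (u ∘ w)).card
      = (univ.filter fun g : Fin t → Fin s => wof g = w ∧ condA G H H' g).card
          * ew s t w := by
  have hmaps : ∀ u ∈ (univ.filter fun u : Fin (min s t) → Fin s =>
      Injective u ∧ condA G H H' (u ∘ w)), (fun u => u ∘ w) u ∈
      (univ.filter fun g : Fin t → Fin s => wof g = w ∧ condA G H H' g) := by
    intro u hu
    rw [mem_filter] at hu ⊢
    exact ⟨mem_univ _, wof_comp hw hu.2.1, hu.2.2⟩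
  rw [Finset.card_eq_sum_card_fiberwise hmaps]
  have hterm : ∀ g ∈ (univ.filter fun g : Fin t → Fin s => wof g = w ∧ condA G H H' g),
      ((univ.filter fun u : Fin (min s t) → Fin s =>
        Injective u ∧ condA G H H' (u ∘ w)).filter fun u => u ∘ w = g).card = ew s t w := by
    intro g hg
    rw [mem_filter] at hg
    have hker : ∀ i j, w i = w j ↔ g i = g j := fun i j => by
      rw [← hg.2.1]; exact wof_eq_iff
    rw [Finset.filter_filter, ew, ← card_ext w g hker]
    congr 1
    ext u
    simp only [mem_filter, mem_univ, true_and]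
    constructor
    · rintro ⟨⟨hu, _⟩, huw⟩; exact ⟨hu, huw⟩
    · rintro ⟨hu, huw⟩
      refine ⟨⟨hu, ?_⟩, huw⟩
      rw [huw]; exact hg.2.2
  rw [Finset.sum_congr rfl hterm, Finset.sum_const, smul_eq_mul]

lemma step2c (G : SimpleGraph (Fin s)) (H H' : SimpleGraph (Fin t))
    {w : Fin t → Fin (min s t)} (hw : isCanon w) :
    (univ.filter fun g : Fin t → Fin s => wof g = w ∧ condA G H H' g).card * ew s t w
      = ∑ K : SimpleGraph (Fin (min s t)), if condA K H H' w
          then (univ.filter fun u : Fin (min s t) → Fin s =>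
              Injective u ∧ pull G u = K).card
          else 0 := by
  rw [← step2b G H H' hw]
  have hset : (univ.filter fun u : Fin (min s t) → Fin s =>
        Injective u ∧ condA G H H' (u ∘ w))
      = univ.filter fun u => Injective u ∧ condA (pull G u) H H' w := by
    ext u
    simp only [mem_filter, mem_univ, true_and]
    constructor
    · rintro ⟨hu, hc⟩; exact ⟨hu, (condA_comp G H H' hu).mp hc⟩
    · rintro ⟨hu, hc⟩; exact ⟨hu, (condA_comp G H H' hu).mpr hc⟩
  rw [hset]
  convert card_filter_comp (fun u : Fin (min s t) → Fin s => pull G u) Injective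
    (fun K => condA K H H' w) using 3
  congr!

/-- coefficient of the bilinear map. -/
noncomputable def coefB (s t : ℕ) (H : SimpleGraph (Fin t))
    (z : (Fin t → Fin (min s t)) × SimpleGraph (Fin (min s t)) × SimpleGraph (Fin t)) : ℝ :=
  if isCanon z.1 ∧ condA z.2.1 H z.2.2 z.1
  then (Nat.descFactorial s (min s t) : ℝ) / ((ew s t z.1 : ℝ) * (s : ℝ) ^ t)
  else 0

/-- the bilinear map. -/
noncomputable def Bmap (s t : ℕ) : (SimpleGraph (Fin (min s t)) → ℝ) →ₗ[ℝ]
    (SimpleGraph (Fin t) → ℝ) →ₗ[ℝ] (SimpleGraph (Fin t) → ℝ) :=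
  LinearMap.mk₂ ℝ
    (fun x y H =>
      ∑ z : (Fin t → Fin (min s t)) × SimpleGraph (Fin (min s t)) × SimpleGraph (Fin t),
        coefB s t H z * x z.2.1 * y z.2.2)
    (fun x x' y => by
      funext H
      simp only [Pi.add_apply, mul_add, add_mul]
      rw [← Finset.sum_add_distrib])
    (fun c x y => by
      funext H
      simp only [Pi.smul_apply, smul_eq_mul]
      rw [Finset.mul_sum]
      exact Finset.sum_congr rfl fun z _ => by ring)
    (fun x y y' => by
      funext H
      simp only [Pi.add_apply, mul_add]
      rw [← Finset.sum_add_distrib])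
    (fun c x y => by
      funext H
      simp only [Pi.smul_apply, smul_eq_mul]
      rw [Finset.mul_sum]
      exact Finset.sum_congr rfl fun z _ => by ring)

lemma main_identity (hs : 1 ≤ s) (G : SimpleGraph (Fin s)) {V : Type} [Fintype V]
    [Nonempty V] (G' : SimpleGraph V) (H : SimpleGraph (Fin t)) :
    labDensity H (comp G G')
      = ∑ z : (Fin t → Fin (min s t)) × SimpleGraph (Fin (min s t)) × SimpleGraph (Fin t),
          coefB s t H z * injDensity z.2.1 G * labDensity z.2.2 G' := by
  classical
  have hs0 : (0 : ℝ) < (s : ℝ) := by exact_mod_cast hs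
  have hn0 : (0 : ℝ) < (Fintype.card V : ℝ) := by exact_mod_cast Fintype.card_pos
  have hdfnat : 0 < Nat.descFactorial s (min s t) :=
    Nat.pos_of_ne_zero fun h0 => absurd (Nat.descFactorial_eq_zero_iff_lt.mp h0)
      (by have := min_le_left s t; omega)
  have hdf0 : (0 : ℝ) < (Nat.descFactorial s (min s t) : ℝ) := by exact_mod_cast hdfnat
  -- abbreviations
  set injCnt : SimpleGraph (Fin (min s t)) → ℕ := fun K =>
    (univ.filter fun u : Fin (min s t) → Fin s => Injective u ∧ pull G u = K).card
    with hinjCnt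
  set cnt' : SimpleGraph (Fin t) → ℕ := fun H' =>
    (univ.filter fun h : Fin t → V => pull G' h = H').card with hcnt'
  -- density rewrites
  have hinj : ∀ K : SimpleGraph (Fin (min s t)),
      injDensity K G = (injCnt K : ℝ) / (Nat.descFactorial s (min s t) : ℝ) := by
    intro K
    rw [injDensity, Nat.card_eq_fintype_card, Fintype.card_subtype, Fintype.card_fin, hinjCnt]
  have hlab : ∀ H' : SimpleGraph (Fin t),
      labDensity H' G' = (cnt' H' : ℝ) / (Fintype.card V : ℝ) ^ t := by
    intro H'
    rw [labDensity, Nat.card_eq_fintype_card, Fintype.card_subtype, hcnt']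
  -- left side
  have h1 : labDensity H (comp G G')
      = (∑ H' : SimpleGraph (Fin t),
          ((univ.filter fun g : Fin t → Fin s => condA G H H' g).card : ℝ) * (cnt' H' : ℝ))
        / ((s : ℝ) ^ t * (Fintype.card V : ℝ) ^ t) := by
    rw [labDensity, step1 G G' H]
    rw [Fintype.card_prod, Fintype.card_fin]
    push_cast
    rw [mul_pow]
  rw [h1, Finset.sum_div]
  -- expand each H'-term into the triple sum
  have h2 : ∀ H' : SimpleGraph (Fin t),
      ((univ.filter fun g : Fin t → Fin s => condA G H H' g).card : ℝ) * (cnt' H' : ℝ)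
        / ((s : ℝ) ^ t * (Fintype.card V : ℝ) ^ t)
      = ∑ w : Fin t → Fin (min s t), ∑ K : SimpleGraph (Fin (min s t)),
          (if isCanon w ∧ condA K H H' w
            then (injCnt K : ℝ) * (cnt' H' : ℝ)
              / ((ew s t w : ℝ) * ((s : ℝ) ^ t * (Fintype.card V : ℝ) ^ t))
            else 0) := by
    intro H'
    rw [step2a G H H', Nat.cast_sum, Finset.sum_mul, Finset.sum_div]
    refine Finset.sum_congr rfl fun w _ => ?_
    by_cases hw : isCanon w
    · have hew : (0 : ℝ) < (ew s t w : ℝ) := by exact_mod_cast ew_pos w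
      have h3 : ((univ.filter fun g : Fin t → Fin s =>
            wof g = w ∧ condA G H H' g).card : ℝ) * (ew s t w : ℝ)
          = ∑ K : SimpleGraph (Fin (min s t)),
              (if condA K H H' w then (injCnt K : ℝ) else 0) := by
        have h4 := step2c G H H' hw
        have h5 := congrArg (Nat.cast : ℕ → ℝ) h4
        push_cast at h5
        exact h5
      rw [if_pos hw]
      have h6 : ((univ.filter fun g : Fin t → Fin s =>
            wof g = w ∧ condA G H H' g).card : ℝ)
          = (∑ K : SimpleGraph (Fin (min s t)),
              (if condA K H H' w then (injCnt K : ℝ) else 0)) / (ew s t w : ℝ) := by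
        rw [eq_div_iff (ne_of_gt hew)]
        exact h3
      rw [h6, Finset.sum_div, Finset.sum_mul, Finset.sum_div]
      refine Finset.sum_congr rfl fun K _ => ?_
      by_cases hK : condA K H H' w
      · rw [if_pos hK, if_pos ⟨hw, hK⟩]
        field_simp
      · rw [if_neg hK, if_neg fun hc => hK hc.2]
        simp
    · rw [if_neg hw]
      rw [Finset.sum_congr rfl fun K _ => if_neg fun hc : isCanon w ∧ _ => hw hc.1]
      simp
  rw [Finset.sum_congr rfl fun H' _ => h2 H']
  -- reorganize the sums and identify terms
  rw [Fintype.sum_prod_type]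
  rw [Finset.sum_comm]
  refine Finset.sum_congr rfl fun w _ => ?_
  rw [Fintype.sum_prod_type, Finset.sum_comm]
  refine Finset.sum_congr rfl fun K _ => Finset.sum_congr rfl fun H' _ => ?_
  rw [hinj K, hlab H', coefB]
  by_cases hc : isCanon w ∧ condA K H H' w
  · rw [if_pos hc, if_pos hc]
    have hew : (0 : ℝ) < (ew s t w : ℝ) := by exact_mod_cast ew_pos w
    field_simp
  · rw [if_neg hc, if_neg hc]
    simp

end IndAux

open IndPaper in
/-- For `s, t ≥ 2`, with `m = min s t`, there is a bilinear map `B` such that for every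
graph `G` on exactly `s` vertices and every finite nonempty graph `G'`,
`r_t(G ⊙ G') = B(p_m(G), r_t(G'))`. -/
theorem comp_labDensity_bilinear (s t : ℕ) (hs : 2 ≤ s) (ht : 2 ≤ t) :
    ∃ B : (SimpleGraph (Fin (min s t)) → ℝ) →ₗ[ℝ]
        (SimpleGraph (Fin t) → ℝ) →ₗ[ℝ] (SimpleGraph (Fin t) → ℝ),
      ∀ (G : SimpleGraph (Fin s)) (V : Type) [Fintype V] [Nonempty V]
        (G' : SimpleGraph V),
        (fun H : SimpleGraph (Fin t) => labDensity H (comp G G')) =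
          B (fun H : SimpleGraph (Fin (min s t)) => injDensity H G)
            (fun H : SimpleGraph (Fin t) => labDensity H G') := by
  refine ⟨IndAux.Bmap s t, fun G V _ _ G' => ?_⟩
  funext H
  show labDensity H (comp G G') = _
  rw [IndAux.Bmap, LinearMap.mk₂_apply]
  exact IndAux.main_identity (by omega) G G' H
end
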